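/- (Two-level atom passivity and unit-gain identity.) Let s be a bounded operator on a complex Hilbert space satisfying s² = 0 and s s* s = s (as the lowering operator σ₋ of a two-level atom does), let γ ≥ 0 be real, and let w be any bounded operator. Then 𝓛_{√γ s}(s*s) + √γ ( w*[s*s, s] + [s*, s*s]w ) = −(√γ s + w)*(√γ s + w) + w*w. In particular 𝓛_{√γ s}(s*s) = −γ s*s. -/

import Mathlib

noncomputable section

variable {E : Type*} [NormedAddCommGroup E] [InnerProductSpace ℂ E] [CompleteSpace E]

/-- The single-channel Lindblad superoperator `𝓛_L(X) = (1/2)(L*[X,L] + [L*,X]L)`. -/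
def lind1 (L X : E →L[ℂ] E) : E →L[ℂ] E :=
  (2 : ℂ)⁻¹ • (star L * ⁅X, L⁆ + ⁅star L, X⁆ * L)

/-- two-level atom passivity and unit-gain identity: if `s² = 0` and
`s s* s = s` (as for the lowering operator `σ₋`), `γ ≥ 0`, and `w` is any bounded
operator, then
`𝓛_{√γ s}(s*s) + √γ (w*[s*s, s] + [s*, s*s]w) = −(√γ s + w)*(√γ s + w) + w*w`,
and in particular `𝓛_{√γ s}(s*s) = −γ s*s`. -/
theorem stmt_15 (s w : E →L[ℂ] E) (γ : ℝ) (hγ : 0 ≤ γ)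
    (hs2 : s * s = 0) (hsss : s * star s * s = s) :
    (lind1 ((Real.sqrt γ : ℂ) • s) (star s * s)
        + (Real.sqrt γ : ℂ) • (star w * ⁅star s * s, s⁆ + ⁅star s, star s * s⁆ * w)
      = -(star ((Real.sqrt γ : ℂ) • s + w) * ((Real.sqrt γ : ℂ) • s + w))
          + star w * w)
      ∧ lind1 ((Real.sqrt γ : ℂ) • s) (star s * s) = (-(γ : ℂ)) • (star s * s) := by
  set r : ℂ := (Real.sqrt γ : ℂ) with hr
  have hrr : r * r = (γ : ℂ) := by
    rw [hr]; norm_cast; exact Real.mul_self_sqrt hγ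
  have hstar_r : star r = r := by
    rw [hr]; exact Complex.conj_ofReal _
  have h1 : star s * s * s = 0 := by rw [mul_assoc, hs2, mul_zero]
  have h2 : s * (star s * s) = s := by rw [← mul_assoc, hsss]
  have h3 : star s * star s = 0 := by
    have := congrArg star hs2; simpa [star_mul] using this
  have h4 : star s * s * star s = star s := by
    have := congrArg star hsss
    simpa [star_mul, mul_assoc] using this
  have hc1 : ⁅star s * s, s⁆ = -s := by
    rw [Ring.lie_def, h1, h2]; exact zero_sub s
  have hc2 : ⁅star s, star s * s⁆ = -star s := by
    rw [Ring.lie_def, ← mul_assoc, h3, zero_mul, h4]; exact zero_sub _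
  have hlind : lind1 (r • s) (star s * s) = (-(γ : ℂ)) • (star s * s) := by
    rw [lind1, star_smul, hstar_r, (show ⁅star s * s, r • s⁆ = r • ⁅star s * s, s⁆ by rw [Ring.lie_def, Ring.lie_def, mul_smul_comm, smul_mul_assoc, smul_sub]), (show ⁅r • star s, star s * s⁆ = r • ⁅star s, star s * s⁆ by rw [Ring.lie_def, Ring.lie_def, smul_mul_assoc, mul_smul_comm, smul_sub]), hc1, hc2]
    rw [← hrr]
    simp only [smul_mul_smul_comm, mul_neg, neg_mul, smul_neg, smul_smul]
    module
  refine ⟨?_, hlind⟩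
  rw [hlind, hc1, hc2, star_add, star_smul, hstar_r]
  rw [← hrr]
  simp only [add_mul, mul_add, smul_mul_smul_comm, smul_mul_assoc,
    mul_smul_comm, mul_neg, neg_mul, smul_neg, smul_add, neg_add_rev]
  module
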